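/- Let n be a positive integer, r ∈ ℝ, μ ∈ ℝⁿ, and let σ be an invertible real n × n matrix; set κ := σ⁻¹(μ − r·𝟙) and k := |κ|². Let T > 0, ρ ≥ 0, A > 0, and R > 0 with R ≠ 1; set b := (R−1)(r + k/(2R))/R, assume b + ρ/R ≠ 0, let F(t) = A^{1/R}e^{−b(T−t)} + (e^{−ρt/R}/(b+ρ/R))(1 − e^{−(b+ρ/R)(T−t)}), f := F^R, γ(t) := e^{−ρt/R}/F(t), and π_M := R^{−1}(σσᵀ)⁻¹(μ − r·𝟙). Then for every t ∈ [0, T] and w > 0, the pair (c*, θ*) = (γ(t)·w, π_M·w) maximizes over c > 0 and θ ∈ ℝⁿ the Hamiltonian (c, θ) ↦ e^{−ρt}·c^{1−R}/(1−R) + (r·w + θ·(μ − r·𝟙) − c)·f(t)·w^{−R} + (1/2)·θᵀσσᵀθ·(−R·f(t)·w^{−R−1}), and the maximum value equals −f′(t)·w^{1−R}/(1−R); moreover f(T) = A. That is, V(t, w) = f(t)·w^{1−R}/(1−R) solves the HJB equation of the Merton problem with terminal condition V(T, w) = A·w^{1−R}/(1−R), with optimal consumption c_t = γ(t)·w and optimal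 portfolio θ_t = π_M·w. -/

import Mathlib

open Matrix

lemma merton_bern {u R : ℝ} (hu : 0 < u) (hR : 0 < R) (hR1 : R ≠ 1) :
    (u ^ (1 - R) - 1) / (1 - R) ≤ u - 1 := by
  rcases lt_or_gt_of_ne hR1 with h | h
  · have hq : (0:ℝ) < 1 - R := by linarith
    have hs : (-1:ℝ) ≤ u - 1 := by linarith
    have key := rpow_one_add_le_one_add_mul_self hs (le_of_lt hq) (by linarith : 1 - R ≤ 1)
    rw [show (1:ℝ) + (u - 1) = u by ring] at key
    rw [div_le_iff₀ hq]; nlinarith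
  · have hq : 1 - R < 0 := by linarith
    have h1 : u ^ (1 - R) = Real.exp ((1 - R) * Real.log u) := by
      rw [Real.rpow_def_of_pos hu]; ring_nf
    have h2 : 1 + (1 - R) * Real.log u ≤ u ^ (1 - R) := by
      rw [h1]; have := Real.add_one_le_exp ((1 - R) * Real.log u); linarith
    have h3 : Real.log u ≤ u - 1 := Real.log_le_sub_one_of_pos hu
    have h4 : (1 - R) * (u - 1) ≤ (1 - R) * Real.log u := by nlinarith
    rw [div_le_iff_of_neg hq]; nlinarith

lemma merton_cons {a p c cs R : ℝ} (ha : 0 < a) (hc : 0 < c) (hcs : 0 < cs)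
    (hR : 0 < R) (hR1 : R ≠ 1) (hp : p = a * cs ^ (-R)) :
    a * c ^ (1 - R) / (1 - R) - c * p ≤ a * cs ^ (1 - R) / (1 - R) - cs * p := by
  have hR1' : (1:ℝ) - R ≠ 0 := fun h => hR1 (by linarith)
  have key := merton_bern (u := c / cs) (div_pos hc hcs) hR hR1
  have hdiv : (c / cs) ^ (1 - R) = c ^ (1 - R) / cs ^ (1 - R) :=
    Real.div_rpow hc.le hcs.le (1 - R)
  have hcs1 : cs ^ (1 - R) = cs ^ (-R) * cs := by
    rw [show (1:ℝ) - R = -R + 1 by ring, Real.rpow_add hcs, Real.rpow_one]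
  have hcsp : (0:ℝ) < cs ^ (1 - R) := Real.rpow_pos_of_pos hcs _
  have hap : (0:ℝ) ≤ a * cs ^ (1 - R) := (mul_pos ha hcsp).le
  have step : a * c ^ (1 - R) / (1 - R) - a * cs ^ (1 - R) / (1 - R) ≤ p * c - p * cs := by
    calc a * c ^ (1 - R) / (1 - R) - a * cs ^ (1 - R) / (1 - R)
        = a * cs ^ (1 - R) * (((c / cs) ^ (1 - R) - 1) / (1 - R)) := by
          rw [hdiv]; field_simp
      _ ≤ a * cs ^ (1 - R) * (c / cs - 1) := mul_le_mul_of_nonneg_left key hap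
      _ = p * c - p * cs := by rw [hp, hcs1]; field_simp
  linarith

lemma merton_F_deriv {A R b ρ T : ℝ} (hbρ : b + ρ / R ≠ 0) (t : ℝ)
    (F : ℝ → ℝ)
    (hF : ∀ t : ℝ, F t =
        A ^ (1 / R) * Real.exp (-(b * (T - t))) +
          Real.exp (-(ρ * t / R)) / (b + ρ / R) *
            (1 - Real.exp (-((b + ρ / R) * (T - t))))) :
    HasDerivAt F (b * F t - Real.exp (-(ρ * t / R))) t := by
  have hFe : F = fun t => A ^ (1 / R) * Real.exp (-(b * (T - t))) +
      Real.exp (-(ρ * t / R)) / (b + ρ / R) *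
        (1 - Real.exp (-((b + ρ / R) * (T - t)))) := funext hF
  have h1 : HasDerivAt (fun t : ℝ => -(b * (T - t))) b t := by
    have : HasDerivAt (fun t : ℝ => b * t - b * T) b t := by
      simpa using ((hasDerivAt_id t).const_mul b).sub_const (b * T)
    convert this using 2 with u
    ring
  have h2 : HasDerivAt (fun t : ℝ => -(ρ * t / R)) (-(ρ / R)) t := by
    have : HasDerivAt (fun t : ℝ => -(ρ / R) * t) (-(ρ / R)) t := by
      simpa using (hasDerivAt_id t).const_mul (-(ρ / R))
    convert this using 2 with u
    ring
  have h3 : HasDerivAt (fun t : ℝ => -((b + ρ / R) * (T - t))) (b + ρ / R) t := by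
    have : HasDerivAt (fun t : ℝ => (b + ρ / R) * t - (b + ρ / R) * T) (b + ρ / R) t := by
      simpa using ((hasDerivAt_id t).const_mul (b + ρ / R)).sub_const ((b + ρ / R) * T)
    convert this using 2 with u
    ring
  have e1 := (h1.exp.const_mul (A ^ (1 / R)))
  have e2 : HasDerivAt (fun t : ℝ => Real.exp (-(ρ * t / R)) / (b + ρ / R))
      (Real.exp (-(ρ * t / R)) * (-(ρ / R)) / (b + ρ / R)) t := h2.exp.div_const _
  have e3 : HasDerivAt (fun t : ℝ => 1 - Real.exp (-((b + ρ / R) * (T - t))))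
      (-(Real.exp (-((b + ρ / R) * (T - t))) * (b + ρ / R))) t := (h3.exp).const_sub 1
  have hd := e1.add (e2.mul e3)
  rw [hFe]
  convert hd using 1
  · rfl
  · rfl
  · rfl
  beta_reduce
  set AR := A ^ (1 / R) with hAR
  set E1 := Real.exp (-(b * (T - t))) with hE1
  set E2 := Real.exp (-(ρ * t / R)) with hE2
  set E3 := Real.exp (-((b + ρ / R) * (T - t))) with hE3
  have key : ∀ x : ℝ, x ≠ 0 →
      b * (AR * E1 + E2 / x * (1 - E3)) - E2
        = AR * (E1 * b) + (E2 * -(x - b) / x * (1 - E3) + E2 / x * -(E3 * x)) := by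
    intro x hx
    field_simp
    ring
  have hρeq : -(ρ / R) = -((b + ρ / R) - b) := by ring
  rw [hρeq]
  exact key (b + ρ / R) hbρ

lemma merton_F_pos {A R b ρ T : ℝ} (hA : 0 < A) (hbρ : b + ρ / R ≠ 0)
    {t : ℝ} (ht : t ≤ T)
    (F : ℝ → ℝ)
    (hF : ∀ t : ℝ, F t =
        A ^ (1 / R) * Real.exp (-(b * (T - t))) +
          Real.exp (-(ρ * t / R)) / (b + ρ / R) *
            (1 - Real.exp (-((b + ρ / R) * (T - t))))) :
    0 < F t := by
  rw [hF t]
  have h1 : 0 < A ^ (1 / R) * Real.exp (-(b * (T - t))) :=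
    mul_pos (Real.rpow_pos_of_pos hA _) (Real.exp_pos _)
  have h2 : 0 ≤ Real.exp (-(ρ * t / R)) / (b + ρ / R) *
      (1 - Real.exp (-((b + ρ / R) * (T - t)))) := by
    rcases hbρ.lt_or_gt with hx | hx
    · have ha : Real.exp (-(ρ * t / R)) / (b + ρ / R) ≤ 0 :=
        div_nonpos_of_nonneg_of_nonpos (Real.exp_pos _).le hx.le
      have hb1 : (1:ℝ) ≤ Real.exp (-((b + ρ / R) * (T - t))) := by
        rw [Real.one_le_exp_iff]
        nlinarith
      nlinarith
    · apply mul_nonneg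
      · positivity
      · have : Real.exp (-((b + ρ / R) * (T - t))) ≤ 1 := by
          rw [Real.exp_le_one_iff]
          nlinarith
        linarith
  linarith

set_option maxHeartbeats 1000000 in
/-- The Merton solution solves the HJB equation: with `κ = σ⁻¹(μ − r𝟙)`, `k = |κ|²`,
`b = (R−1)(r + k/(2R))/R`, `f = F^R`, `γ(t) = e^{−ρt/R}/F(t)`,
`π_M = R⁻¹(σσᵀ)⁻¹(μ − r𝟙)`, the pair `(c*, θ*) = (γ(t)w, w·π_M)` maximizes the
HJB Hamiltonian for each `t ∈ [0,T]` and `w > 0`, the maximum value equals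
`−f′(t)·w^{1−R}/(1−R)`, and `f(T) = A`. -/
theorem merton_hjb_solution (n : ℕ) (hn : 0 < n)
    (r ρ T A R b k : ℝ) (μ : Fin n → ℝ) (σ : Matrix (Fin n) (Fin n) ℝ)
    (hσ : IsUnit σ) (κ πM : Fin n → ℝ) (F f γ : ℝ → ℝ)
    (hT : 0 < T) (hρ : 0 ≤ ρ) (hA : 0 < A) (hR : 0 < R) (hR1 : R ≠ 1)
    (hκ : κ = σ⁻¹.mulVec (μ - r • fun _ => (1 : ℝ)))
    (hk : k = κ ⬝ᵥ κ)
    (hb : b = (R - 1) * (r + k / (2 * R)) / R) (hbρ : b + ρ / R ≠ 0)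
    (hF : ∀ t : ℝ, F t =
        A ^ (1 / R) * Real.exp (-(b * (T - t))) +
          Real.exp (-(ρ * t / R)) / (b + ρ / R) *
            (1 - Real.exp (-((b + ρ / R) * (T - t)))))
    (hf : ∀ t : ℝ, f t = F t ^ R)
    (hγ : ∀ t : ℝ, γ t = Real.exp (-(ρ * t / R)) / F t)
    (hπ : πM = R⁻¹ • (σ * σᵀ)⁻¹.mulVec (μ - r • fun _ => (1 : ℝ))) :
    ∀ t ∈ Set.Icc (0 : ℝ) T, ∀ w : ℝ, 0 < w →
      (∀ c : ℝ, 0 < c → ∀ θ : Fin n → ℝ,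
          Real.exp (-(ρ * t)) * c ^ (1 - R) / (1 - R) +
              (r * w + θ ⬝ᵥ (μ - r • fun _ => (1 : ℝ)) - c) * (f t * w ^ (-R)) +
              1 / 2 * (θ ⬝ᵥ (σ * σᵀ).mulVec θ) * (-(R * f t * w ^ (-R - 1))) ≤
            Real.exp (-(ρ * t)) * (γ t * w) ^ (1 - R) / (1 - R) +
              (r * w + (w • πM) ⬝ᵥ (μ - r • fun _ => (1 : ℝ)) - γ t * w) *
                (f t * w ^ (-R)) +
              1 / 2 * ((w • πM) ⬝ᵥ (σ * σᵀ).mulVec (w • πM)) *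
                (-(R * f t * w ^ (-R - 1)))) ∧
      (Real.exp (-(ρ * t)) * (γ t * w) ^ (1 - R) / (1 - R) +
          (r * w + (w • πM) ⬝ᵥ (μ - r • fun _ => (1 : ℝ)) - γ t * w) *
            (f t * w ^ (-R)) +
          1 / 2 * ((w • πM) ⬝ᵥ (σ * σᵀ).mulVec (w • πM)) *
            (-(R * f t * w ^ (-R - 1))) =
        -(deriv f t) * w ^ (1 - R) / (1 - R)) ∧
      f T = A := by
  have hR0 : R ≠ 0 := ne_of_gt hR
  have hR1' : (1:ℝ) - R ≠ 0 := fun h => hR1 (by linarith)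
  -- matrix facts
  set α : Fin n → ℝ := (μ - r • fun _ => (1 : ℝ)) with hα
  have hdet : IsUnit (σ * σᵀ).det := by
    have h := (Matrix.isUnit_iff_isUnit_det σ).mp hσ
    rw [Matrix.det_mul, Matrix.det_transpose]
    exact h.mul h
  have hpos : ∀ d : Fin n → ℝ, 0 ≤ d ⬝ᵥ (σ * σᵀ) *ᵥ d := by
    intro d
    rw [← Matrix.mulVec_mulVec, Matrix.dotProduct_mulVec, Matrix.mulVec_transpose]
    exact Finset.sum_nonneg fun i _ => mul_self_nonneg _
  have hsym : ∀ x y : Fin n → ℝ, x ⬝ᵥ (σ * σᵀ) *ᵥ y = y ⬝ᵥ (σ * σᵀ) *ᵥ x := by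
    intro x y
    rw [Matrix.dotProduct_mulVec, ← Matrix.mulVec_transpose, Matrix.transpose_mul,
      Matrix.transpose_transpose, dotProduct_comm]
  have hSinva : ((σ * σᵀ)⁻¹ *ᵥ α) ⬝ᵥ α = k := by
    rw [hk, hκ, Matrix.mul_inv_rev, ← Matrix.transpose_nonsing_inv, ← Matrix.mulVec_mulVec,
      Matrix.mulVec_transpose, ← Matrix.dotProduct_mulVec, dotProduct_comm]
  have hπα : πM ⬝ᵥ α = k / R := by
    rw [hπ, smul_dotProduct, hSinva, smul_eq_mul]
    ring
  have hSpi : (σ * σᵀ) *ᵥ πM = R⁻¹ • α := by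
    rw [hπ, Matrix.mulVec_smul, Matrix.mulVec_mulVec, Matrix.mul_nonsing_inv _ hdet,
      Matrix.one_mulVec]
  intro t ht w hw
  have hG : 0 < F t := merton_F_pos hA hbρ ht.2 F hF
  have hE : 0 < Real.exp (-(ρ * t / R)) := Real.exp_pos _
  set E := Real.exp (-(ρ * t / R)) with hEdef
  have haE : Real.exp (-(ρ * t)) = E ^ R := by
    rw [hEdef, ← Real.exp_mul]
    congr 1
    field_simp
  have hγt : γ t = E / F t := hγ t
  have hcs : 0 < γ t * w := by
    rw [hγt]
    positivity
  -- p = a * cs^(-R)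
  have hp : f t * w ^ (-R) = Real.exp (-(ρ * t)) * (γ t * w) ^ (-R) := by
    rw [hγt, Real.mul_rpow (by positivity) hw.le, Real.div_rpow hE.le hG.le,
      haE, hf t]
    rw [Real.rpow_neg hE.le, Real.rpow_neg hG.le]
    have hERne : E ^ R ≠ 0 := by positivity
    have hGRne : F t ^ R ≠ 0 := by positivity
    field_simp
  -- dot product values
  have hθsα : (w • πM) ⬝ᵥ α = w * (k / R) := by
    rw [smul_dotProduct, hπα, smul_eq_mul]
  have hpiSpi : πM ⬝ᵥ (σ * σᵀ) *ᵥ πM = k / (R * R) := by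
    rw [hSpi, dotProduct_smul, hπα, smul_eq_mul]
    field_simp
  have hthsS : (w • πM) ⬝ᵥ (σ * σᵀ) *ᵥ (w • πM) = w * w * (k / (R * R)) := by
    rw [smul_dotProduct, Matrix.mulVec_smul, dotProduct_smul, hpiSpi,
      smul_eq_mul, smul_eq_mul]
    ring
  have hSths : (σ * σᵀ) *ᵥ (w • πM) = (w / R) • α := by
    rw [Matrix.mulVec_smul, hSpi, smul_smul]
    congr 1
  -- scalar setup
  have hwR : (0:ℝ) < w ^ (-R) := Real.rpow_pos_of_pos hw _
  have hwR1 : (0:ℝ) < w ^ (-R - 1) := Real.rpow_pos_of_pos hw _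
  have hft : 0 < f t := by rw [hf t]; positivity
  have hww : w ^ (-R - 1) * w = w ^ (-R) := by
    rw [← Real.rpow_add_one (ne_of_gt hw)]
    norm_num
  refine ⟨?_, ?_, ?_⟩
  · -- maximization
    intro c hc θ
    set p := f t * w ^ (-R) with hpdef
    set s := R * f t * w ^ (-R - 1) with hsdef
    have hppos : 0 < p := mul_pos hft hwR
    have hspos : 0 < s := by positivity
    have hps : p = s * (w / R) := by
      rw [hpdef, hsdef, ← hww]
      field_simp
    have hcons := merton_cons (p := p) (Real.exp_pos (-(ρ * t))) hc hcs hR hR1 hp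
    -- portfolio part
    set X := θ ⬝ᵥ α with hX
    set Q := θ ⬝ᵥ (σ * σᵀ) *ᵥ θ with hQ
    have hM : θ ⬝ᵥ (σ * σᵀ) *ᵥ (w • πM) = (w / R) * X := by
      rw [hSths, dotProduct_smul, smul_eq_mul]
    have e0 := hpos (w • πM - θ)
    rw [sub_dotProduct, Matrix.mulVec_sub, dotProduct_sub,
      dotProduct_sub, hsym (w • πM) θ, hthsS, hM] at e0
    have h5 : 0 ≤ (s / 2) * ((w * w * (k / (R * R)) - (w / R) * X) - ((w / R) * X - Q)) :=
      mul_nonneg (by positivity) e0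
    have hport : X * p - 1 / 2 * Q * s ≤
        w * (k / R) * p - 1 / 2 * (w * w * (k / (R * R))) * s := by
      have key : w * (k / R) * p - 1 / 2 * (w * w * (k / (R * R))) * s -
          (X * p - 1 / 2 * Q * s) =
          (s / 2) * ((w * w * (k / (R * R)) - (w / R) * X) - ((w / R) * X - Q)) := by
        rw [hps]; ring
      linarith
    rw [hθsα, hthsS]
    linarith [hcons, hport]
  · -- equality with -f'(t) w^(1-R)/(1-R)
    have hFd := merton_F_deriv hbρ t F hF
    have hfe : f = fun u => F u ^ R := funext hf
    have hfd : HasDerivAt f ((b * F t - E) * R * F t ^ (R - 1)) t := by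
      rw [hfe]
      exact hFd.rpow_const (Or.inl (ne_of_gt hG))
    have hderiv : deriv f t = (b * F t - E) * R * F t ^ (R - 1) := hfd.deriv
    have hG1 : F t ^ R = F t ^ (R - 1) * F t := by
      rw [← Real.rpow_add_one (ne_of_gt hG)]
      norm_num
    have hw1' : w ^ (-R) = w ^ (1 - R) / w := by
      rw [show (1:ℝ) - R = -R + 1 by ring, Real.rpow_add_one (ne_of_gt hw)]
      field_simp
    have hw2' : w ^ (-R - 1) = w ^ (1 - R) / (w * w) := by
      rw [show (1:ℝ) - R = (-R - 1) + 1 + 1 by ring,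
        Real.rpow_add_one (ne_of_gt hw), Real.rpow_add_one (ne_of_gt hw)]
      field_simp
    have ha1 : Real.exp (-(ρ * t)) * (γ t * w) ^ (1 - R) =
        E * F t ^ (R - 1) * w ^ (1 - R) := by
      rw [hγt, Real.mul_rpow (by positivity) hw.le, Real.div_rpow hE.le hG.le, haE]
      have hEe : E ^ R * (E ^ (1 - R) / F t ^ (1 - R) * w ^ (1 - R)) =
          (E ^ R * E ^ (1 - R)) * w ^ (1 - R) / F t ^ (1 - R) := by ring
      rw [hEe, ← Real.rpow_add hE, show R + (1 - R) = 1 by ring, Real.rpow_one]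
      rw [show R - 1 = -(1 - R) by ring, Real.rpow_neg hG.le]
      field_simp
    rw [hθsα, hthsS, hderiv, hb, hf t, hγt]
    rw [show Real.exp (-(ρ * t)) * (E / F t * w) ^ (1 - R) / (1 - R) =
        Real.exp (-(ρ * t)) * (γ t * w) ^ (1 - R) / (1 - R) by rw [hγt]]
    rw [ha1, hG1, hw1', hw2']
    have hGne := ne_of_gt hG
    have hwne := ne_of_gt hw
    field_simp
    ring
  · -- terminal condition
    have hFT : F T = A ^ (1 / R) := by
      rw [hF T]
      simp
    rw [hf T, hFT, ← Real.rpow_mul hA.le, one_div, inv_mul_cancel₀ hR0, Real.rpow_one]
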